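/- In a commutative tridendriform algebra (with products ≺ and commutative ·), the product x ∗ y := x ≺ y + y ≺ x + x · y is associative and commutative. -/
import Mathlib


/-- In a commutative tridendriform algebra (bilinear products `≺` and commutative `·`
satisfying `(x ≺ y) ≺ z = x ≺ (y ≺ z + z ≺ y + y · z)`, `(x · y) ≺ z = x · (y ≺ z)`
and `(x · y) · z = x · (y · z)`), the product `x ∗ y = x ≺ y + y ≺ x + x · y` is
associative and commutative. -/
theorem stmt17 (k V : Type*) [Field k] [AddCommGroup V] [Module k V]
    (prec dot : V →ₗ[k] V →ₗ[k] V)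
    (hdotcomm : ∀ x y : V, dot x y = dot y x)
    (h1 : ∀ x y z : V, prec (prec x y) z = prec x (prec y z + prec z y + dot y z))
    (h2 : ∀ x y z : V, prec (dot x y) z = dot x (prec y z))
    (h3 : ∀ x y z : V, dot (dot x y) z = dot x (dot y z)) :
    (∀ x y z : V,
        (fun a b => prec a b + prec b a + dot a b)
            ((fun a b => prec a b + prec b a + dot a b) x y) z =
          (fun a b => prec a b + prec b a + dot a b) x
            ((fun a b => prec a b + prec b a + dot a b) y z)) ∧
      (∀ x y : V,
        (fun a b => prec a b + prec b a + dot a b) x y =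
          (fun a b => prec a b + prec b a + dot a b) y x) := by
  constructor
  · intro x y z
    simp only [map_add, LinearMap.add_apply]
    have hA : dot (prec x y) z = prec (dot z x) y := by
      rw [hdotcomm, ← h2]
    have hB : dot (prec y x) z = prec (dot z y) x := by
      rw [hdotcomm, ← h2]
    have hC : dot x (prec z y) = prec (dot x z) y := (h2 x z y).symm
    have hD : dot y (prec z x) = prec (dot y z) x := (h2 y z x).symm
    have hE : dot x (prec y z) = prec (dot x y) z := (h2 x y z).symm
    rw [h1, h1, h1, h1, hA, hB, hC, hE, h3,
      hdotcomm z x, hdotcomm z y, hdotcomm y x]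
    simp only [map_add, LinearMap.add_apply]
    abel
  · intro x y
    simp only [hdotcomm x y]
    abel
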